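/- Fix an integer N ≥ 1 and for each i ≥ 1 a homogeneous polynomial map F^i = (F^i_0,…,F^i_N) : ℂ^{N+1} → ℂ^{N+1} of degree d_i ≥ 2 whose only common zero is 0. Suppose there is c ≥ 0 with |(1/d_i) log|F^i(x)| − log|x|| ≤ c for all i ≥ 1 and all x ∈ ℂ^{N+1}∖{0} (where |x| is the Euclidean norm). Define G_0(x) = log|x|² and G_n(x) = (1/(d_1⋯d_n)) log|F^n∘⋯∘F^1(x)|². Then |G_n(x) − G_{n−1}(x)| ≤ c/2^{n−2} for all n ≥ 1 and all x ≠ 0, and consequently G_n converges uniformly on ℂ^{N+1}∖{0} to a continuous function G. -/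

import Mathlib

open Filter Finset

/-- `orbitFrom F k n x = F (k+n) (⋯ (F (k+1) x))`, applying `F (k+1)` first. -/
def orbitFrom {X : Type*} (F : ℕ → X → X) (k : ℕ) : ℕ → X → X
  | 0 => fun x => x
  | n + 1 => fun x => F (k + n + 1) (orbitFrom F k n x)

/-- `prodFrom d k n = d (k+1) * ⋯ * d (k+n)`. -/
def prodFrom (d : ℕ → ℕ) (k n : ℕ) : ℕ := ∏ i ∈ Finset.range n, d (k + i + 1)

/-- `Gfun F d n x = (1/(d 1 ⋯ d n)) log ‖F^n ∘ ⋯ ∘ F^1 (x)‖²`. -/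
noncomputable def Gfun {N : ℕ} (F : ℕ → EuclideanSpace ℂ (Fin (N + 1)) →
    EuclideanSpace ℂ (Fin (N + 1))) (d : ℕ → ℕ) (n : ℕ)
    (x : EuclideanSpace ℂ (Fin (N + 1))) : ℝ :=
  (1 / (prodFrom d 0 n : ℝ)) * Real.log (‖orbitFrom F 0 n x‖ ^ 2)

theorem stmt15 (N : ℕ)
    (F : ℕ → EuclideanSpace ℂ (Fin (N + 1)) → EuclideanSpace ℂ (Fin (N + 1)))
    (d : ℕ → ℕ) (hd : ∀ i, 2 ≤ d i)
    -- each F i is a homogeneous polynomial map of degree d i: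
    (hpoly : ∀ i, ∃ P : Fin (N + 1) → MvPolynomial (Fin (N + 1)) ℂ,
      (∀ j, (P j).IsHomogeneous (d i)) ∧ ∀ x j, F i x j = MvPolynomial.eval x (P j))
    -- whose only common zero is 0:
    (hzero : ∀ i x, F i x = 0 → x = 0)
    (c : ℝ) (hc : 0 ≤ c)
    (hb : ∀ i x, x ≠ 0 → |(1 / (d i : ℝ)) * Real.log ‖F i x‖ - Real.log ‖x‖| ≤ c) :
    (∀ n, 1 ≤ n → ∀ x, x ≠ 0 →
      |Gfun F d n x - Gfun F d (n - 1) x| ≤ c / (2 : ℝ) ^ ((n : ℝ) - 2)) ∧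
    ∃ G : EuclideanSpace ℂ (Fin (N + 1)) → ℝ,
      ContinuousOn G {x | x ≠ 0} ∧
      TendstoUniformlyOn (fun n x => Gfun F d n x) G atTop {x | x ≠ 0} := by
  -- basic positivity facts
  have hdpos : ∀ i, (0 : ℝ) < (d i : ℝ) := fun i => by
    have := hd i; positivity
  have horb : ∀ n x, x ≠ (0 : EuclideanSpace ℂ (Fin (N + 1))) → orbitFrom F 0 n x ≠ 0 := by
    intro n
    induction n with
    | zero => intro x hx; simpa [orbitFrom] using hx
    | succ m ih =>
      intro x hx h
      exact ih x hx (hzero (0 + m + 1) _ h)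
  have hPpos : ∀ n, (0 : ℝ) < (prodFrom d 0 n : ℝ) := by
    intro n
    have : 0 < prodFrom d 0 n := by
      apply Finset.prod_pos
      intro i _
      have := hd (0 + i + 1)
      omega
    exact_mod_cast this
  have hPge : ∀ n, (2 : ℝ) ^ n ≤ (prodFrom d 0 n : ℝ) := by
    intro n
    have : 2 ^ n ≤ prodFrom d 0 n := by
      unfold prodFrom
      calc 2 ^ n = ∏ _i ∈ Finset.range n, 2 := by simp
        _ ≤ ∏ i ∈ Finset.range n, d (0 + i + 1) := by
            apply Finset.prod_le_prod
            · intro i _; omega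
            · intro i _; exact hd _
    exact_mod_cast this
  -- the key step estimate
  have key : ∀ m x, x ≠ (0 : EuclideanSpace ℂ (Fin (N + 1))) →
      |Gfun F d (m + 1) x - Gfun F d m x| ≤ 2 * c / 2 ^ m := by
    intro m x hx
    set y := orbitFrom F 0 m x with hy
    have hy0 : y ≠ 0 := horb m x hx
    have horb1 : orbitFrom F 0 (m + 1) x = F (0 + m + 1) y := rfl
    have hFy0 : F (0 + m + 1) y ≠ 0 := fun h => hy0 (hzero _ _ h)
    have hP1 : (prodFrom d 0 (m + 1) : ℝ) = (prodFrom d 0 m : ℝ) * (d (0 + m + 1) : ℝ) := by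
      unfold prodFrom
      push_cast [Finset.prod_range_succ]
      ring
    have hP := hPpos m
    have hdm := hdpos (0 + m + 1)
    have gen : ∀ (P D L1 L2 : ℝ), P ≠ 0 → D ≠ 0 →
        (1 / (P * D)) * ((2 : ℕ) * L1) - (1 / P) * ((2 : ℕ) * L2) =
          (2 / P) * ((1 / D) * L1 - L2) := by
      intro P D L1 L2 hP hD
      field_simp
      ring
    have heq : Gfun F d (m + 1) x - Gfun F d m x =
        (2 / (prodFrom d 0 m : ℝ)) *
          ((1 / (d (0 + m + 1) : ℝ)) * Real.log ‖F (0 + m + 1) y‖ - Real.log ‖y‖) := by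
      unfold Gfun
      rw [horb1, hP1, ← hy]
      rw [show (‖F (0+m+1) y‖ ^ 2) = ‖F (0+m+1) y‖ ^ (2:ℕ) from rfl,
        show (‖y‖ ^ 2) = ‖y‖ ^ (2:ℕ) from rfl, Real.log_pow, Real.log_pow]
      exact gen _ _ _ _ hP.ne' hdm.ne'
    rw [heq, abs_mul, abs_of_pos (by positivity)]
    calc (2 / (prodFrom d 0 m : ℝ)) * |(1 / (d (0 + m + 1) : ℝ)) *
          Real.log ‖F (0 + m + 1) y‖ - Real.log ‖y‖|
        ≤ (2 / (prodFrom d 0 m : ℝ)) * c := by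
          apply mul_le_mul_of_nonneg_left (hb _ _ hy0) (by positivity)
      _ ≤ 2 * c / 2 ^ m := by
          rw [div_mul_eq_mul_div]
          gcongr
          exact hPge m
  -- part 1
  have part1 : ∀ n, 1 ≤ n → ∀ x, x ≠ (0 : EuclideanSpace ℂ (Fin (N + 1))) →
      |Gfun F d n x - Gfun F d (n - 1) x| ≤ c / (2 : ℝ) ^ ((n : ℝ) - 2) := by
    intro n hn x hx
    obtain ⟨m, rfl⟩ : ∃ m, n = m + 1 := ⟨n - 1, by omega⟩
    simp only [Nat.add_sub_cancel]
    have hrp : (2 : ℝ) ^ ((↑(m + 1) : ℝ) - 2) = (2 : ℝ) ^ (m : ℕ) / 2 := by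
      have h1 : (↑(m + 1) : ℝ) - 2 = (m : ℝ) - 1 := by push_cast; ring
      rw [h1, Real.rpow_sub (by norm_num), Real.rpow_one, Real.rpow_natCast]
    rw [hrp]
    have := key m x hx
    calc |Gfun F d (m + 1) x - Gfun F d m x| ≤ 2 * c / 2 ^ m := this
      _ = c / ((2:ℝ) ^ m / 2) := by
          rw [div_div_eq_mul_div]
          ring
    -- done
  refine ⟨part1, ?_⟩
  -- uniform Cauchy estimate
  have hdist : ∀ n m, n ≤ m → ∀ x, x ≠ (0 : EuclideanSpace ℂ (Fin (N + 1))) →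
      dist (Gfun F d n x) (Gfun F d m x) ≤ 4 * c * (1 / 2 : ℝ) ^ n := by
    intro n m hnm x hx
    have hstep : ∀ k ∈ Finset.Ico n m,
        dist (Gfun F d k x) (Gfun F d (k + 1) x) ≤ 2 * c * (1 / 2 : ℝ) ^ k := by
      intro k _
      rw [dist_comm, Real.dist_eq]
      calc |Gfun F d (k + 1) x - Gfun F d k x| ≤ 2 * c / 2 ^ k := key k x hx
        _ = 2 * c * (1 / 2 : ℝ) ^ k := by rw [one_div, inv_pow]; ring
    calc dist (Gfun F d n x) (Gfun F d m x)
        ≤ ∑ k ∈ Finset.Ico n m, 2 * c * (1 / 2 : ℝ) ^ k :=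
          dist_le_Ico_sum_of_dist_le hnm fun {k} h1 h2 =>
            hstep k (Finset.mem_Ico.mpr ⟨h1, h2⟩)
      _ = 2 * c * ((1 / 2 : ℝ) ^ n * ∑ j ∈ Finset.range (m - n), (1 / 2 : ℝ) ^ j) := by
          rw [← Finset.mul_sum]
          congr 1
          rw [Finset.sum_Ico_eq_sum_range]
          simp only [pow_add]
          rw [← Finset.mul_sum]
      _ ≤ 2 * c * ((1 / 2 : ℝ) ^ n * 2) := by
          gcongr
          exact sum_geometric_two_le _
      _ = 4 * c * (1 / 2 : ℝ) ^ n := by ring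
  have hcauchy : UniformCauchySeqOn (fun n x => Gfun F d n x) atTop
      {x : EuclideanSpace ℂ (Fin (N + 1)) | x ≠ 0} := by
    rw [Metric.uniformCauchySeqOn_iff]
    intro ε hε
    obtain ⟨K, hK⟩ := pow_unbounded_of_one_lt (R := ℝ) (4 * c / ε) one_lt_two
    have hKε : 4 * c * (1 / 2 : ℝ) ^ K < ε := by
      have h2K : (0:ℝ) < 2 ^ K := by positivity
      have := (div_lt_iff₀ hε).mp hK
      rw [one_div, inv_pow, mul_comm (4*c)]
      rw [inv_mul_lt_iff₀ h2K]
      nlinarith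
    refine ⟨K, fun m hm n hn x hx => ?_⟩
    have hbound : ∀ a b : ℕ, K ≤ a → a ≤ b →
        dist (Gfun F d a x) (Gfun F d b x) < ε := by
      intro a b hKa hab
      calc dist (Gfun F d a x) (Gfun F d b x) ≤ 4 * c * (1 / 2 : ℝ) ^ a :=
            hdist a b hab x hx
        _ ≤ 4 * c * (1 / 2 : ℝ) ^ K := by
            have hp := pow_le_pow_of_le_one (by norm_num : (0:ℝ) ≤ 1/2)
              (by norm_num : (1/2:ℝ) ≤ 1) hKa
            have h4c : (0:ℝ) ≤ 4 * c := by positivity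
            exact mul_le_mul_of_nonneg_left hp h4c
        _ < ε := hKε
    rcases le_total m n with h | h
    · exact hbound m n hm h
    · rw [dist_comm]; exact hbound n m hn h
  -- pointwise Cauchy, hence pointwise limit
  have hcs : ∀ x ∈ {x : EuclideanSpace ℂ (Fin (N + 1)) | x ≠ 0},
      CauchySeq (fun n => Gfun F d n x) := by
    intro x hx
    apply cauchySeq_of_le_geometric (1 / 2 : ℝ) (2 * c) (by norm_num)
    intro n
    rw [dist_comm, Real.dist_eq]
    calc |Gfun F d (n + 1) x - Gfun F d n x| ≤ 2 * c / 2 ^ n := key n x hx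
      _ = 2 * c * (1 / 2 : ℝ) ^ n := by rw [one_div, inv_pow]; ring
  set G : EuclideanSpace ℂ (Fin (N + 1)) → ℝ :=
    fun x => limUnder atTop (fun n => Gfun F d n x) with hG
  have htend : ∀ x ∈ {x : EuclideanSpace ℂ (Fin (N + 1)) | x ≠ 0},
      Tendsto (fun n => Gfun F d n x) atTop (nhds (G x)) :=
    fun x hx => (hcs x hx).tendsto_limUnder
  have hunif : TendstoUniformlyOn (fun n x => Gfun F d n x) G atTop
      {x : EuclideanSpace ℂ (Fin (N + 1)) | x ≠ 0} :=
    hcauchy.tendstoUniformlyOn_of_tendsto htend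
  -- continuity
  have hFc : ∀ i, Continuous (F i) := by
    intro i
    obtain ⟨P, _, hPe⟩ := hpoly i
    have h1 : Continuous fun (x : Fin (N + 1) → ℂ) (j : Fin (N + 1)) =>
        MvPolynomial.eval x (P j) :=
      continuous_pi fun j => MvPolynomial.continuous_eval (P j)
    have h2 : F i = fun x => (WithLp.equiv 2 (Fin (N + 1) → ℂ)).symm
        (fun j => MvPolynomial.eval ((WithLp.equiv 2 (Fin (N + 1) → ℂ)) x) (P j)) := by
      funext x
      apply PiLp.ext
      intro j
      exact hPe x j
    rw [h2]
    exact (PiLp.continuous_toLp (p := 2) (β := fun _ => ℂ)).comp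
      (h1.comp (PiLp.continuous_ofLp (p := 2) (β := fun _ => ℂ)))
  have horbc : ∀ n, Continuous (orbitFrom F 0 n) := by
    intro n
    induction n with
    | zero => exact continuous_id
    | succ m ih => exact (hFc (0 + m + 1)).comp ih
  have hGc : ∀ n : ℕ, ContinuousOn (Gfun F d n)
      {x : EuclideanSpace ℂ (Fin (N + 1)) | x ≠ 0} := by
    intro n
    unfold Gfun
    apply ContinuousOn.mul continuousOn_const
    apply ContinuousOn.log
    · exact (((horbc n).norm).pow 2).continuousOn
    · intro x hx
      exact pow_ne_zero 2 (norm_ne_zero_iff.mpr (horb n x hx))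
  exact ⟨G, hunif.continuousOn (Filter.Eventually.of_forall hGc).frequently, hunif⟩
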